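/- The family O of observable regular languages is closed under Kleene plus: if L is observable then L⁺ is observable. -/

import Mathlib

open Computability

/-- A state `q` of a DFA is *observable* if some word leads from it to an accepting state. -/
def ObsState {α σ : Type} (M : DFA α σ) (q : σ) : Prop :=
  ∃ w : List α, M.evalFrom q w ∈ M.accept

/-- A state is *semi-observable* if it is observable and some single input symbol
leads from it to a non-observable state. -/
def SemiObsState {α σ : Type} (M : DFA α σ) (q : σ) : Prop :=
  ObsState M q ∧ ∃ a : α, ¬ ObsState M (M.step q a)

/-- All states of the DFA are accessible from the start state. -/
def Accessible {α σ : Type} (M : DFA α σ) : Prop :=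
  ∀ q : σ, ∃ w : List α, M.eval w = q

/-- `L` is accepted by some (completely specified, accessible) DFA all of whose
states are observable.  This is membership in the family `O` over the alphabet `α`. -/
def AcceptsObservably (α : Type) (L : Language α) : Prop :=
  ∃ (σ : Type) (_ : Fintype σ) (M : DFA α σ),
    Accessible M ∧ (∀ q : σ, ObsState M q) ∧ M.accepts = L

/-- Membership in the family `T_k`: `L` is accepted by some accessible DFA with at
most `k` semi-observable states. -/
def InT (α : Type) (k : ℕ) (L : Language α) : Prop :=
  ∃ (σ : Type) (_ : Fintype σ) (M : DFA α σ),
    Accessible M ∧ M.accepts = L ∧ {q : σ | SemiObsState M q}.ncard ≤ k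

/-- The alphabet (the whole type `α`) is minimal for `L`: every letter occurs in some word of `L`. -/
def MinimalAlphabet {α : Type} (L : Language α) : Prop :=
  ∀ a : α, ∃ w ∈ L, a ∈ w

namespace PlusAux

variable {α σ : Type}

/-- Determinized "Kleene plus" DFA on sets of states. -/
def plusDFA (M : DFA α σ) : DFA α (Set σ) where
  step S a := (fun q => M.step q a) '' S ∪
    {s | s = M.start ∧ ∃ q ∈ S, M.step q a ∈ M.accept}
  start := {M.start}
  accept := {S | ∃ q ∈ S, q ∈ M.accept}

lemma evalFrom_cons (M : DFA α σ) (s : σ) (a : α) (v : List α) :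
    M.evalFrom s (a :: v) = M.evalFrom (M.step s a) v := rfl

lemma lemA (M : DFA α σ) {q : σ} {S : Set σ} (h : q ∈ S) (v : List α) :
    M.evalFrom q v ∈ (plusDFA M).evalFrom S v := by
  induction v generalizing q S with
  | nil => simpa using h
  | cons a v ih =>
      rw [evalFrom_cons, evalFrom_cons]
      exact ih (Or.inl ⟨q, h, rfl⟩)

lemma lemB' (M : DFA α σ) {S : Set σ} (hs : M.start ∈ S) {x : List α}
    (hx : x ∈ M.accepts) : M.start ∈ (plusDFA M).evalFrom S x := by
  rcases List.eq_nil_or_concat x with rfl | ⟨y, a, rfl⟩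
  · simpa using hs
  · rw [List.concat_eq_append] at hx ⊢
    rw [DFA.evalFrom_append_singleton]
    refine Or.inr ⟨rfl, M.evalFrom M.start y, lemA M hs y, ?_⟩
    have : M.evalFrom M.start (y ++ [a]) ∈ M.accept := hx
    simpa using this

lemma star_restart (M : DFA α σ) {S : Set σ} (hs : M.start ∈ S) {u : List α}
    (hu : u ∈ M.accepts∗) : M.start ∈ (plusDFA M).evalFrom S u := by
  rw [Language.mem_kstar] at hu
  obtain ⟨ws, rfl, hws⟩ := hu
  induction ws generalizing S with
  | nil => simpa using hs
  | cons x ws ih =>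
      rw [List.flatten_cons, DFA.evalFrom_of_append]
      exact ih (lemB' M hs (hws x (List.mem_cons_self)))
        (fun y hy => hws y (List.mem_cons_of_mem _ hy))

lemma mem_eval_iff (M : DFA α σ) (w : List α) (q : σ) :
    q ∈ (plusDFA M).eval w ↔
      ∃ u v, w = u ++ v ∧ u ∈ M.accepts∗ ∧ q = M.evalFrom M.start v := by
  constructor
  · induction w using List.reverseRecOn generalizing q with
    | nil =>
        intro hq
        refine ⟨[], [], rfl, Language.nil_mem_kstar _, ?_⟩
        have : q ∈ ({M.start} : Set σ) := hq
        simpa using this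
    | append_singleton y a ih =>
        intro hq
        rw [DFA.eval_append_singleton] at hq
        rcases hq with ⟨p, hp, rfl⟩ | ⟨rfl, p, hp, hpa⟩
        · obtain ⟨u, v, rfl, hu, rfl⟩ := ih _ hp
          exact ⟨u, v ++ [a], by simp, hu, by simp⟩
        · obtain ⟨u, v, rfl, hu, rfl⟩ := ih _ hp
          refine ⟨(u ++ v) ++ [a], [], by simp, ?_, rfl⟩
          rw [Language.mem_kstar] at hu ⊢
          obtain ⟨ws, rfl, hws⟩ := hu
          refine ⟨ws ++ [v ++ [a]], by simp, ?_⟩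
          intro z hz
          rcases List.mem_append.1 hz with hz | hz
          · exact hws z hz
          · rw [List.mem_singleton] at hz
            subst hz
            rw [DFA.mem_accepts]
            simpa [DFA.eval] using hpa
  · rintro ⟨u, v, rfl, hu, rfl⟩
    rw [DFA.eval, DFA.evalFrom_of_append]
    exact lemA M (star_restart M (show M.start ∈ ({M.start} : Set σ) from rfl) hu) v

lemma star_mul_comm (L : Language α) : L∗ * L = L * L∗ := by
  ext w
  rw [Language.mem_mul, Language.mem_mul]
  constructor
  · rintro ⟨u, hu, v, hv, rfl⟩
    rw [Language.mem_kstar] at hu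
    obtain ⟨ws, rfl, hws⟩ := hu
    cases ws with
    | nil => exact ⟨v, hv, [], Language.nil_mem_kstar _, by simp⟩
    | cons x ws =>
        refine ⟨x, hws x (List.mem_cons_self), ws.flatten ++ v, ?_, by simp⟩
        rw [Language.mem_kstar]
        refine ⟨ws ++ [v], by simp, fun y hy => ?_⟩
        rcases List.mem_append.1 hy with hy | hy
        · exact hws y (List.mem_cons_of_mem _ hy)
        · rw [List.mem_singleton] at hy; subst hy; exact hv
  · rintro ⟨u, hu, v, hv, rfl⟩
    rw [Language.mem_kstar] at hv
    obtain ⟨ws, rfl, hws⟩ := hv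
    rcases List.eq_nil_or_concat ws with rfl | ⟨ws', y, rfl⟩
    · exact ⟨[], Language.nil_mem_kstar _, u, hu, by simp⟩
    · refine ⟨u ++ ws'.flatten, ?_, y, hws y (by simp), by simp⟩
      rw [Language.mem_kstar]
      exact ⟨u :: ws', by simp, fun z hz => by
        rcases List.mem_cons.1 hz with rfl | hz
        · exact hu
        · exact hws z (by simp [hz])⟩

lemma plus_accepts (M : DFA α σ) :
    (plusDFA M).accepts = M.accepts * M.accepts∗ := by
  rw [← star_mul_comm]
  ext w
  rw [DFA.mem_accepts, Language.mem_mul]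
  constructor
  · rintro ⟨q, hq, hacc⟩
    obtain ⟨u, v, rfl, hu, rfl⟩ := (mem_eval_iff M _ q).1 hq
    exact ⟨u, hu, v, hacc, rfl⟩
  · rintro ⟨u, hu, v, hv, rfl⟩
    exact ⟨M.evalFrom M.start v, (mem_eval_iff M _ _).2 ⟨u, v, rfl, hu, rfl⟩, hv⟩

/-- Restriction of `plusDFA` to its accessible states. -/
def Reach (M : DFA α σ) : Type := {S : Set σ // ∃ w, (plusDFA M).eval w = S}

noncomputable def plusDFA' (M : DFA α σ) : DFA α (Reach M) where
  step S a := ⟨(plusDFA M).step S.val a, by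
    obtain ⟨w, hw⟩ := S.2
    exact ⟨w ++ [a], by rw [DFA.eval_append_singleton, hw]⟩⟩
  start := ⟨(plusDFA M).start, ⟨[], rfl⟩⟩
  accept := {S | S.val ∈ (plusDFA M).accept}

lemma plusDFA'_evalFrom_val (M : DFA α σ) (S : Reach M) (w : List α) :
    ((plusDFA' M).evalFrom S w).val = (plusDFA M).evalFrom S.val w := by
  induction w generalizing S with
  | nil => rfl
  | cons a v ih => rw [evalFrom_cons, evalFrom_cons, ih]; rfl

lemma plusDFA'_eval_val (M : DFA α σ) (w : List α) :
    ((plusDFA' M).eval w).val = (plusDFA M).eval w :=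
  plusDFA'_evalFrom_val M _ w

lemma plusDFA'_accepts (M : DFA α σ) :
    (plusDFA' M).accepts = M.accepts * M.accepts∗ := by
  rw [← plus_accepts]
  ext w
  rw [DFA.mem_accepts, DFA.mem_accepts]
  show ((plusDFA' M).eval w).val ∈ (plusDFA M).accept ↔ _
  rw [plusDFA'_eval_val]

lemma plusDFA'_accessible (M : DFA α σ) : Accessible (plusDFA' M) := by
  rintro ⟨S, w, hw⟩
  exact ⟨w, Subtype.ext (by rw [plusDFA'_eval_val, hw])⟩

lemma plusDFA'_observable (M : DFA α σ) (hM : ∀ q : σ, ObsState M q) :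
    ∀ S : Reach M, ObsState (plusDFA' M) S := by
  rintro ⟨S, w, hw⟩
  have hmem : M.eval w ∈ S := by
    rw [← hw]
    exact lemA M (show M.start ∈ ({M.start} : Set σ) from rfl) w
  obtain ⟨v, hv⟩ := hM (M.eval w)
  refine ⟨v, ?_⟩
  show ((plusDFA' M).evalFrom _ v).val ∈ (plusDFA M).accept
  rw [plusDFA'_evalFrom_val M ⟨S, w, hw⟩ v]
  exact ⟨M.evalFrom (M.eval w) v, lemA M hmem v, hv⟩

end PlusAux

/-- The family `O` of observable regular languages is closed under Kleene plus. -/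
theorem observable_closed_kleene_plus {α : Type} [Fintype α] (L : Language α)
    (hobs : AcceptsObservably α L) : AcceptsObservably α (L * L∗) := by
  obtain ⟨σ, instF, M, hacc, hobsst, hL⟩ := hobs
  haveI : Finite (PlusAux.Reach M) := by
    unfold PlusAux.Reach
    infer_instance
  refine ⟨PlusAux.Reach M, Fintype.ofFinite _, PlusAux.plusDFA' M,
    PlusAux.plusDFA'_accessible M, PlusAux.plusDFA'_observable M hobsst, ?_⟩
  rw [PlusAux.plusDFA'_accepts, hL]
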